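/- Let (p₁,q₁,r₁) and (p₂,q₂,r₂) be triples of pairwise coprime integers with 1 < pᵢ < qᵢ < rᵢ (i = 1,2). If p₁ ≥ p₂, q₁ ≥ q₂ and r₁ ≥ r₂, then κ(p₁,q₁,r₁) ≥ κ(p₂,q₂,r₂). -/

import Mathlib

set_option maxHeartbeats 1000000

lemma kappa_mul_ceil (m : ℤ) (a : ℕ) (ha : 0 < a) :
    (a : ℤ) * ⌈(m : ℚ) / a⌉ = m + (-m) % a := by
  have ha' : (0:ℤ) < (a:ℤ) := by exact_mod_cast ha
  have haQ : (0:ℚ) < (a:ℚ) := by exact_mod_cast ha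
  set A : ℤ := (-m) % a with hA
  have hA0 : 0 ≤ A := Int.emod_nonneg _ (by positivity)
  have hA1 : A < a := Int.emod_lt_of_pos _ ha'
  have hdvd : (a:ℤ) ∣ m + A := by
    refine ⟨-((-m) / a), ?_⟩
    rw [hA, Int.emod_def]
    ring
  obtain ⟨k, hk⟩ := hdvd
  have hceil : ⌈(m : ℚ) / a⌉ = k := by
    rw [Int.ceil_eq_iff]
    constructor
    · rw [lt_div_iff₀ haQ]
      have h1 : ((k:ℤ) - 1) * a = m + A - a := by linear_combination -hk
      have h2 : ((k:ℤ) - 1) * a < m := by omega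
      exact_mod_cast h2
    · rw [div_le_iff₀ haQ]
      have h1 : (k:ℤ) * a = m + A := by linear_combination -hk
      have h2 : m ≤ (k:ℤ) * a := by omega
      exact_mod_cast h2
  rw [hceil]; omega

/-- The key counting lemma: `|∑ᶠ n, min 0 (Δ n)|` equals the number of lattice points
`(x,y,z)` with `0 < x < p`, `0 < y < q`, `0 < z < r` and `xqr + ypr + zpq < pqr`. -/
lemma kappa_card (p q r : ℕ) (hp : 0 < p) (hq : 0 < q) (hr : 0 < r)
    (e : ℤ) (p' q' r' : ℕ)
    (heq : e * (p*q*r : ℤ) + (p':ℤ)*q*r + (p:ℤ)*q'*r + (p:ℤ)*q*r' = -1)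
    (Δ : ℕ → ℤ)
    (hΔ : ∀ n : ℕ, Δ n = 1 + |e| * n - ⌈(n*p' : ℚ)/p⌉ - ⌈(n*q' : ℚ)/q⌉ - ⌈(n*r' : ℚ)/r⌉) :
    |∑ᶠ n : ℕ, min 0 (Δ n)| =
      (((Finset.range p ×ˢ Finset.range q ×ˢ Finset.range r).filter
        (fun t => 0 < t.1 ∧ 0 < t.2.1 ∧ 0 < t.2.2 ∧
          t.1*q*r + t.2.1*p*r + t.2.2*p*q < p*q*r)).card : ℤ) := by
  have hpZ : (0:ℤ) < p := by exact_mod_cast hp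
  have hqZ : (0:ℤ) < q := by exact_mod_cast hq
  have hrZ : (0:ℤ) < r := by exact_mod_cast hr
  have hP : (0:ℤ) < (p:ℤ)*q*r := by positivity
  have he : |e| = -e := by
    have n1 : (0:ℤ) ≤ (p':ℤ)*q*r := by positivity
    have n2 : (0:ℤ) ≤ (p:ℤ)*q'*r := by positivity
    have n3 : (0:ℤ) ≤ (p:ℤ)*q*r' := by positivity
    have h1 : e * ((p:ℤ)*q*r) ≤ -1 := by linarith
    have : e < 0 := by
      by_contra h
      push_neg at h
      nlinarith [mul_nonneg h (le_of_lt hP)]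
    exact abs_of_neg this
  -- residue functions
  set A : ℕ → ℤ := fun n => (-((n:ℤ) * p')) % p with hAdef
  set B : ℕ → ℤ := fun n => (-((n:ℤ) * q')) % q with hBdef
  set C : ℕ → ℤ := fun n => (-((n:ℤ) * r')) % r with hCdef
  have hA0 : ∀ n, 0 ≤ A n := fun n => Int.emod_nonneg _ (by positivity)
  have hA1 : ∀ n, A n < p := fun n => Int.emod_lt_of_pos _ hpZ
  have hB0 : ∀ n, 0 ≤ B n := fun n => Int.emod_nonneg _ (by positivity)
  have hB1 : ∀ n, B n < q := fun n => Int.emod_lt_of_pos _ hqZ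
  have hC0 : ∀ n, 0 ≤ C n := fun n => Int.emod_nonneg _ (by positivity)
  have hC1 : ∀ n, C n < r := fun n => Int.emod_lt_of_pos _ hrZ
  -- the key identity
  have key : ∀ n : ℕ, ((p:ℤ)*q*r) * Δ n
      = (p:ℤ)*q*r + n - A n * ((q:ℤ)*r) - B n * ((p:ℤ)*r) - C n * ((p:ℤ)*q) := by
    intro n
    have h1 := kappa_mul_ceil ((n:ℤ)*(p':ℤ)) p hp
    have h2 := kappa_mul_ceil ((n:ℤ)*(q':ℤ)) q hq
    have h3 := kappa_mul_ceil ((n:ℤ)*(r':ℤ)) r hr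
    have hA' : A n = (-((n:ℤ) * p')) % p := by rw [hAdef]
    have hB' : B n = (-((n:ℤ) * q')) % q := by rw [hBdef]
    have hC' : C n = (-((n:ℤ) * r')) % r := by rw [hCdef]
    rw [← hA'] at h1
    rw [← hB'] at h2
    rw [← hC'] at h3
    rw [hΔ n, he]
    push_cast at h1 h2 h3 ⊢
    linear_combination (-(n:ℤ)) * heq - ((q:ℤ)*r) * h1 - ((p:ℤ)*r) * h2 - ((p:ℤ)*q) * h3
  -- Δ n ≥ -1 always
  have hΔge : ∀ n : ℕ, -1 ≤ Δ n := by
    intro n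
    by_contra h
    push_neg at h
    have h2 : Δ n ≤ -2 := by omega
    have hk := key n
    have bA : A n * ((q:ℤ)*r) ≤ ((p:ℤ)-1) * ((q:ℤ)*r) :=
      mul_le_mul_of_nonneg_right (by have := hA1 n; omega) (by positivity)
    have bB : B n * ((p:ℤ)*r) ≤ ((q:ℤ)-1) * ((p:ℤ)*r) :=
      mul_le_mul_of_nonneg_right (by have := hB1 n; omega) (by positivity)
    have bC : C n * ((p:ℤ)*q) ≤ ((r:ℤ)-1) * ((p:ℤ)*q) :=
      mul_le_mul_of_nonneg_right (by have := hC1 n; omega) (by positivity)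
    nlinarith [Int.natCast_nonneg n, mul_le_mul_of_nonneg_left h2 (le_of_lt hP),
      mul_pos hqZ hrZ, mul_pos hpZ hrZ, mul_pos hpZ hqZ]
  -- Δ n ≥ 0 for n ≥ 2pqr
  have hΔpos : ∀ n : ℕ, 2*p*q*r ≤ n → 0 ≤ Δ n := by
    intro n hn
    by_contra h
    push_neg at h
    have h2 : Δ n ≤ -1 := by omega
    have hnZ : (2:ℤ)*p*q*r ≤ (n:ℤ) := by exact_mod_cast hn
    have hk := key n
    have bA : A n * ((q:ℤ)*r) ≤ ((p:ℤ)-1) * ((q:ℤ)*r) :=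
      mul_le_mul_of_nonneg_right (by have := hA1 n; omega) (by positivity)
    have bB : B n * ((p:ℤ)*r) ≤ ((q:ℤ)-1) * ((p:ℤ)*r) :=
      mul_le_mul_of_nonneg_right (by have := hB1 n; omega) (by positivity)
    have bC : C n * ((p:ℤ)*q) ≤ ((r:ℤ)-1) * ((p:ℤ)*q) :=
      mul_le_mul_of_nonneg_right (by have := hC1 n; omega) (by positivity)
    nlinarith [hnZ, mul_le_mul_of_nonneg_left h2 (le_of_lt hP),
      mul_pos hqZ hrZ, mul_pos hpZ hrZ, mul_pos hpZ hqZ]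
  set N := 2*p*q*r with hN
  -- finsum to finset sum
  have hfin : ∑ᶠ n : ℕ, min 0 (Δ n) = ∑ n ∈ Finset.range N, min 0 (Δ n) := by
    apply finsum_eq_sum_of_support_subset
    intro n hn
    simp only [Function.mem_support, ne_eq] at hn
    simp only [Finset.coe_range, Set.mem_Iio]
    by_contra hge
    push_neg at hge
    exact hn (by have := hΔpos n hge; omega)
  set S := (Finset.range N).filter (fun n => Δ n < 0) with hS
  have hsum : ∑ n ∈ Finset.range N, min 0 (Δ n) = - (S.card : ℤ) := by
    have : ∀ n ∈ Finset.range N, min 0 (Δ n) = if Δ n < 0 then (-1 : ℤ) else 0 := by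
      intro n _
      have := hΔge n
      by_cases h : Δ n < 0
      · simp [h]; omega
      · simp [h]; omega
    rw [Finset.sum_congr rfl this, Finset.sum_ite, Finset.sum_const, Finset.sum_const]
    simp [hS]
  rw [hfin, hsum, abs_neg, abs_of_nonneg (by positivity)]
  congr 1
  -- now the bijection
  set T := (Finset.range p ×ˢ Finset.range q ×ˢ Finset.range r).filter
        (fun t : ℕ × ℕ × ℕ => 0 < t.1 ∧ 0 < t.2.1 ∧ 0 < t.2.2 ∧
          t.1*q*r + t.2.1*p*r + t.2.2*p*q < p*q*r) with hT
  -- divisibility facts  p'qr ≡ -1 mod p, etc.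
  have hd1 : (p:ℤ) ∣ ((p':ℤ)*q*r + 1) := ⟨-(e*q*r + q'*r + q*r'), by linarith [heq]⟩
  have hd2 : (q:ℤ) ∣ ((q':ℤ)*p*r + 1) := ⟨-(e*p*r + p'*r + p*r'), by linarith [heq]⟩
  have hd3 : (r:ℤ) ∣ ((r':ℤ)*p*q + 1) := ⟨-(e*p*q + p'*q + p*q'), by linarith [heq]⟩
  -- residue computations
  have hAres : ∀ (m x : ℕ), 0 < x → x < p → ((p:ℤ) ∣ (m:ℤ) + x*q*r) → A m = p - x := by
    intro m x hx1 hx2 hdvd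
    have hxZ : (0:ℤ) < (x:ℤ) := by exact_mod_cast hx1
    have hxZ2 : (x:ℤ) < p := by exact_mod_cast hx2
    have hdvd2 : (p:ℤ) ∣ (-((m:ℤ)*p') - ((p:ℤ) - x)) := by
      obtain ⟨k1, hk1⟩ := hdvd
      obtain ⟨k2, hk2⟩ := hd1
      exact ⟨-(p':ℤ)*k1 + x*k2 - 1, by linear_combination (-(p':ℤ)) * hk1 + (x:ℤ) * hk2⟩
    have hmod : (-((m:ℤ)*p')) % p = ((p:ℤ) - x) % p := by
      rw [Int.emod_eq_emod_iff_emod_sub_eq_zero]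
      exact Int.emod_eq_zero_of_dvd hdvd2
    rw [hAdef]
    simp only
    rw [hmod, Int.emod_eq_of_lt (by omega) (by omega)]
  have hBres : ∀ (m y : ℕ), 0 < y → y < q → ((q:ℤ) ∣ (m:ℤ) + y*p*r) → B m = q - y := by
    intro m y hy1 hy2 hdvd
    have hyZ : (0:ℤ) < (y:ℤ) := by exact_mod_cast hy1
    have hyZ2 : (y:ℤ) < q := by exact_mod_cast hy2
    have hdvd2 : (q:ℤ) ∣ (-((m:ℤ)*q') - ((q:ℤ) - y)) := by
      obtain ⟨k1, hk1⟩ := hdvd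
      obtain ⟨k2, hk2⟩ := hd2
      exact ⟨-(q':ℤ)*k1 + y*k2 - 1, by linear_combination (-(q':ℤ)) * hk1 + (y:ℤ) * hk2⟩
    have hmod : (-((m:ℤ)*q')) % q = ((q:ℤ) - y) % q := by
      rw [Int.emod_eq_emod_iff_emod_sub_eq_zero]
      exact Int.emod_eq_zero_of_dvd hdvd2
    rw [hBdef]
    simp only
    rw [hmod, Int.emod_eq_of_lt (by omega) (by omega)]
  have hCres : ∀ (m z : ℕ), 0 < z → z < r → ((r:ℤ) ∣ (m:ℤ) + z*p*q) → C m = r - z := by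
    intro m z hz1 hz2 hdvd
    have hzZ : (0:ℤ) < (z:ℤ) := by exact_mod_cast hz1
    have hzZ2 : (z:ℤ) < r := by exact_mod_cast hz2
    have hdvd2 : (r:ℤ) ∣ (-((m:ℤ)*r') - ((r:ℤ) - z)) := by
      obtain ⟨k1, hk1⟩ := hdvd
      obtain ⟨k2, hk2⟩ := hd3
      exact ⟨-(r':ℤ)*k1 + z*k2 - 1, by linear_combination (-(r':ℤ)) * hk1 + (z:ℤ) * hk2⟩
    have hmod : (-((m:ℤ)*r')) % r = ((r:ℤ) - z) % r := by
      rw [Int.emod_eq_emod_iff_emod_sub_eq_zero]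
      exact Int.emod_eq_zero_of_dvd hdvd2
    rw [hCdef]
    simp only
    rw [hmod, Int.emod_eq_of_lt (by omega) (by omega)]
  -- the map ψ : T → S
  have hψval : ∀ t : ℕ × ℕ × ℕ, t ∈ T →
      (0 < t.1 ∧ t.1 < p ∧ 0 < t.2.1 ∧ t.2.1 < q ∧ 0 < t.2.2 ∧ t.2.2 < r ∧
        t.1*q*r + t.2.1*p*r + t.2.2*p*q < p*q*r) := by
    intro t ht
    rw [hT, Finset.mem_filter, Finset.mem_product, Finset.mem_product] at ht
    simp only [Finset.mem_range] at ht
    exact ⟨ht.2.1, ht.1.1, ht.2.2.1, ht.1.2.1, ht.2.2.2.1, ht.1.2.2, ht.2.2.2.2⟩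
  have hψres : ∀ t : ℕ × ℕ × ℕ, t ∈ T →
      let m := p*q*r - (t.1*q*r + t.2.1*p*r + t.2.2*p*q)
      A m = p - t.1 ∧ B m = q - t.2.1 ∧ C m = r - t.2.2 := by
    intro t ht
    obtain ⟨hx1, hx2, hy1, hy2, hz1, hz2, hlt⟩ := hψval t ht
    intro m
    have hmZ : (m:ℤ) = (p:ℤ)*q*r - (t.1*q*r + t.2.1*p*r + t.2.2*p*q) := by
      have : t.1*q*r + t.2.1*p*r + t.2.2*p*q ≤ p*q*r := le_of_lt hlt
      show ((p*q*r - (t.1*q*r + t.2.1*p*r + t.2.2*p*q) : ℕ) : ℤ) = _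
      push_cast [Nat.cast_sub this]
      ring
    refine ⟨hAres m t.1 hx1 hx2 ?_, hBres m t.2.1 hy1 hy2 ?_, hCres m t.2.2 hz1 hz2 ?_⟩
    · exact ⟨(q:ℤ)*r - t.2.1*r - t.2.2*q, by rw [hmZ]; ring⟩
    · exact ⟨(p:ℤ)*r - t.1*r - t.2.2*p, by rw [hmZ]; ring⟩
    · exact ⟨(p:ℤ)*q - t.1*q - t.2.1*p, by rw [hmZ]; ring⟩
  have hψS : ∀ t : ℕ × ℕ × ℕ, t ∈ T →
      p*q*r - (t.1*q*r + t.2.1*p*r + t.2.2*p*q) ∈ S := by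
    intro t ht
    obtain ⟨hx1, hx2, hy1, hy2, hz1, hz2, hlt⟩ := hψval t ht
    obtain ⟨hA', hB', hC'⟩ := hψres t ht
    set m := p*q*r - (t.1*q*r + t.2.1*p*r + t.2.2*p*q) with hm
    have hmZ : (m:ℤ) = (p:ℤ)*q*r - (t.1*q*r + t.2.1*p*r + t.2.2*p*q) := by
      have : t.1*q*r + t.2.1*p*r + t.2.2*p*q ≤ p*q*r := le_of_lt hlt
      show ((p*q*r - (t.1*q*r + t.2.1*p*r + t.2.2*p*q) : ℕ) : ℤ) = _
      push_cast [Nat.cast_sub this]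
      ring
    have hkey := key m
    rw [hA', hB', hC'] at hkey
    have hΔm : ((p:ℤ)*q*r) * Δ m = ((p:ℤ)*q*r) * (-1) := by
      rw [hkey, hmZ]; ring
    have hΔm' : Δ m = -1 := mul_left_cancel₀ (ne_of_gt hP) hΔm
    rw [hS, Finset.mem_filter, Finset.mem_range]
    have h1 : 0 < p*q*r := by positivity
    have h2 : N = p*q*r + p*q*r := by rw [hN]; ring
    have h3 : m ≤ p*q*r := Nat.sub_le _ _
    exact ⟨by omega, by omega⟩
  rw [hT] at *
  refine (Finset.card_bij
    (fun t _ => p*q*r - (t.1*q*r + t.2.1*p*r + t.2.2*p*q)) hψS ?_ ?_).symm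
  · -- injectivity
    intro t1 ht1 t2 ht2 hval
    obtain ⟨hx1, hx2, hy1, hy2, hz1, hz2, hlt1⟩ := hψval t1 ht1
    obtain ⟨hx1', hx2', hy1', hy2', hz1', hz2', hlt2⟩ := hψval t2 ht2
    obtain ⟨hA1, hB1, hC1'⟩ := hψres t1 ht1
    obtain ⟨hA2, hB2, hC2'⟩ := hψres t2 ht2
    rw [hval] at hA1 hB1 hC1'
    have ex : (p:ℤ) - t1.1 = (p:ℤ) - t2.1 := by rw [← hA1, ← hA2]
    have ey : (q:ℤ) - t1.2.1 = (q:ℤ) - t2.2.1 := by rw [← hB1, ← hB2]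
    have ez : (r:ℤ) - t1.2.2 = (r:ℤ) - t2.2.2 := by rw [← hC1', ← hC2']
    have : t1.1 = t2.1 := by exact_mod_cast (by linarith : (t1.1:ℤ) = t2.1)
    have : t1.2.1 = t2.2.1 := by exact_mod_cast (by linarith : (t1.2.1:ℤ) = t2.2.1)
    have : t1.2.2 = t2.2.2 := by exact_mod_cast (by linarith : (t1.2.2:ℤ) = t2.2.2)
    ext <;> omega
  · -- surjectivity
    intro n hn
    rw [hS, Finset.mem_filter, Finset.mem_range] at hn
    obtain ⟨hnN, hneg⟩ := hn
    have hΔn : Δ n = -1 := le_antisymm (by omega) (hΔge n)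
    have hkey := key n
    rw [hΔn] at hkey
    have hsum3 : A n * ((q:ℤ)*r) + B n * ((p:ℤ)*r) + C n * ((p:ℤ)*q)
        = 2*((p:ℤ)*q*r) + n := by linarith
    -- A n, B n, C n ≥ 1
    have hA1' : 1 ≤ A n := by
      by_contra h
      push_neg at h
      have : A n = 0 := by have := hA0 n; omega
      rw [this] at hsum3
      have bB := mul_le_mul_of_nonneg_right
        (show B n ≤ (q:ℤ)-1 by have := hB1 n; omega)
        (show (0:ℤ) ≤ (p:ℤ)*r by positivity)
      have bC := mul_le_mul_of_nonneg_right
        (show C n ≤ (r:ℤ)-1 by have := hC1 n; omega)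
        (show (0:ℤ) ≤ (p:ℤ)*q by positivity)
      nlinarith [Int.natCast_nonneg n, mul_pos hpZ hrZ, mul_pos hpZ hqZ]
    have hB1' : 1 ≤ B n := by
      by_contra h
      push_neg at h
      have : B n = 0 := by have := hB0 n; omega
      rw [this] at hsum3
      have bA := mul_le_mul_of_nonneg_right
        (show A n ≤ (p:ℤ)-1 by have := hA1 n; omega)
        (show (0:ℤ) ≤ (q:ℤ)*r by positivity)
      have bC := mul_le_mul_of_nonneg_right
        (show C n ≤ (r:ℤ)-1 by have := hC1 n; omega)
        (show (0:ℤ) ≤ (p:ℤ)*q by positivity)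
      nlinarith [Int.natCast_nonneg n, mul_pos hqZ hrZ, mul_pos hpZ hqZ]
    have hC1'' : 1 ≤ C n := by
      by_contra h
      push_neg at h
      have : C n = 0 := by have := hC0 n; omega
      rw [this] at hsum3
      have bA := mul_le_mul_of_nonneg_right
        (show A n ≤ (p:ℤ)-1 by have := hA1 n; omega)
        (show (0:ℤ) ≤ (q:ℤ)*r by positivity)
      have bB := mul_le_mul_of_nonneg_right
        (show B n ≤ (q:ℤ)-1 by have := hB1 n; omega)
        (show (0:ℤ) ≤ (p:ℤ)*r by positivity)
      nlinarith [Int.natCast_nonneg n, mul_pos hqZ hrZ, mul_pos hpZ hrZ]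
    have hn1 : 1 ≤ n := by
      by_contra h
      push_neg at h
      interval_cases n
      · have : A 0 = 0 := by rw [hAdef]; simp
        omega
    set x := p - (A n).toNat with hx
    set y := q - (B n).toNat with hy
    set z := r - (C n).toNat with hz
    have hAx : (x:ℤ) = (p:ℤ) - A n := by
      rw [hx]
      have h1 : (A n).toNat ≤ p := by
        have := hA1 n; omega
      push_cast [Nat.cast_sub h1]
      have := hA0 n
      omega
    have hBy : (y:ℤ) = (q:ℤ) - B n := by
      rw [hy]
      have h1 : (B n).toNat ≤ q := by have := hB1 n; omega
      push_cast [Nat.cast_sub h1]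
      have := hB0 n
      omega
    have hCz : (z:ℤ) = (r:ℤ) - C n := by
      rw [hz]
      have h1 : (C n).toNat ≤ r := by have := hC1 n; omega
      push_cast [Nat.cast_sub h1]
      have := hC0 n
      omega
    refine ⟨(x, y, z), ?_, ?_⟩
    · rw [Finset.mem_filter, Finset.mem_product, Finset.mem_product]
      simp only [Finset.mem_range]
      have hx1 : 0 < x := by
        have := hA1 n
        have h0 : (0:ℤ) < (x:ℤ) := by rw [hAx]; omega
        exact_mod_cast h0
      have hx2 : x < p := by
        have h0 : (x:ℤ) < p := by rw [hAx]; omega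
        exact_mod_cast h0
      have hy1 : 0 < y := by
        have h0 : (0:ℤ) < (y:ℤ) := by rw [hBy]; have := hB1 n; omega
        exact_mod_cast h0
      have hy2 : y < q := by
        have h0 : (y:ℤ) < q := by rw [hBy]; omega
        exact_mod_cast h0
      have hz1 : 0 < z := by
        have h0 : (0:ℤ) < (z:ℤ) := by rw [hCz]; have := hC1 n; omega
        exact_mod_cast h0
      have hz2 : z < r := by
        have h0 : (z:ℤ) < r := by rw [hCz]; omega
        exact_mod_cast h0
      refine ⟨⟨hx2, hy2, hz2⟩, hx1, hy1, hz1, ?_⟩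
      have hZ : (x:ℤ)*q*r + y*((p:ℤ)*r) + z*((p:ℤ)*q) = (p:ℤ)*q*r - n := by
        rw [hAx, hBy, hCz]; linarith [hsum3]
      have : ((x*q*r + y*(p*r) + z*(p*q) : ℕ) : ℤ) < ((p*q*r : ℕ) : ℤ) := by
        push_cast
        have hn1Z : (1:ℤ) ≤ (n:ℤ) := by exact_mod_cast hn1
        linarith [hZ]
      have := (Nat.cast_lt (α := ℤ)).mp this
      calc x*q*r + y*p*r + z*p*q = x*q*r + y*(p*r) + z*(p*q) := by ring
        _ < p*q*r := this
    · -- ψ(x,y,z) = n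
      have hZ : (x:ℤ)*q*r + y*((p:ℤ)*r) + z*((p:ℤ)*q) = (p:ℤ)*q*r - n := by
        rw [hAx, hBy, hCz]; linarith [hsum3]
      have hle : x*q*r + y*p*r + z*p*q ≤ p*q*r := by
        have : ((x*q*r + y*p*r + z*p*q : ℕ) : ℤ) ≤ ((p*q*r : ℕ) : ℤ) := by
          push_cast
          have : (0:ℤ) ≤ (n:ℤ) := Int.natCast_nonneg n
          linarith [hZ]
        exact_mod_cast this
      have : ((p*q*r - (x*q*r + y*p*r + z*p*q) : ℕ) : ℤ) = (n : ℤ) := by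
        push_cast [Nat.cast_sub hle]
        linarith [hZ]
      exact_mod_cast this

/-- Monotonicity of `κ` on triples: if `(p₁,q₁,r₁) ≥ (p₂,q₂,r₂)` componentwise, then
`κ(p₁,q₁,r₁) ≥ κ(p₂,q₂,r₂)`. -/
theorem stmt_8 (p₁ q₁ r₁ p₂ q₂ r₂ : ℕ)
    (hp₁ : 1 < p₁) (hpq₁ : p₁ < q₁) (hqr₁ : q₁ < r₁)
    (hcopq₁ : Nat.Coprime p₁ q₁) (hcopr₁ : Nat.Coprime p₁ r₁) (hcoqr₁ : Nat.Coprime q₁ r₁)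
    (hp₂ : 1 < p₂) (hpq₂ : p₂ < q₂) (hqr₂ : q₂ < r₂)
    (hcopq₂ : Nat.Coprime p₂ q₂) (hcopr₂ : Nat.Coprime p₂ r₂) (hcoqr₂ : Nat.Coprime q₂ r₂)
    (e₁ : ℤ) (p₁' q₁' r₁' : ℕ)
    (hp₁' : p₁' ≤ p₁ - 1) (hq₁' : q₁' ≤ q₁ - 1) (hr₁' : r₁' ≤ r₁ - 1)
    (heq₁ : e₁ * (p₁ * q₁ * r₁ : ℤ) + (p₁' : ℤ) * q₁ * r₁ + (p₁ : ℤ) * q₁' * r₁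
      + (p₁ : ℤ) * q₁ * r₁' = -1)
    (e₂ : ℤ) (p₂' q₂' r₂' : ℕ)
    (hp₂' : p₂' ≤ p₂ - 1) (hq₂' : q₂' ≤ q₂ - 1) (hr₂' : r₂' ≤ r₂ - 1)
    (heq₂ : e₂ * (p₂ * q₂ * r₂ : ℤ) + (p₂' : ℤ) * q₂ * r₂ + (p₂ : ℤ) * q₂' * r₂
      + (p₂ : ℤ) * q₂ * r₂' = -1)
    (Δ₁ Δ₂ : ℕ → ℤ)
    (hΔ₁ : ∀ n : ℕ, Δ₁ n =
      1 + |e₁| * n - ⌈(n * p₁' : ℚ) / p₁⌉ - ⌈(n * q₁' : ℚ) / q₁⌉ - ⌈(n * r₁' : ℚ) / r₁⌉)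
    (hΔ₂ : ∀ n : ℕ, Δ₂ n =
      1 + |e₂| * n - ⌈(n * p₂' : ℚ) / p₂⌉ - ⌈(n * q₂' : ℚ) / q₂⌉ - ⌈(n * r₂' : ℚ) / r₂⌉)
    (hge : p₂ ≤ p₁ ∧ q₂ ≤ q₁ ∧ r₂ ≤ r₁) :
    |∑ᶠ n : ℕ, min 0 (Δ₂ n)| ≤ |∑ᶠ n : ℕ, min 0 (Δ₁ n)| := by
  obtain ⟨hP, hQ, hR⟩ := hge
  rw [kappa_card p₁ q₁ r₁ (by omega) (by omega) (by omega) e₁ p₁' q₁' r₁' heq₁ Δ₁ hΔ₁]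
  rw [kappa_card p₂ q₂ r₂ (by omega) (by omega) (by omega) e₂ p₂' q₂' r₂' heq₂ Δ₂ hΔ₂]
  have hsub : (Finset.range p₂ ×ˢ Finset.range q₂ ×ˢ Finset.range r₂).filter
        (fun t : ℕ × ℕ × ℕ => 0 < t.1 ∧ 0 < t.2.1 ∧ 0 < t.2.2 ∧
          t.1*q₂*r₂ + t.2.1*p₂*r₂ + t.2.2*p₂*q₂ < p₂*q₂*r₂) ⊆
      (Finset.range p₁ ×ˢ Finset.range q₁ ×ˢ Finset.range r₁).filter
        (fun t : ℕ × ℕ × ℕ => 0 < t.1 ∧ 0 < t.2.1 ∧ 0 < t.2.2 ∧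
          t.1*q₁*r₁ + t.2.1*p₁*r₁ + t.2.2*p₁*q₁ < p₁*q₁*r₁) := by
    intro t ht
    rw [Finset.mem_filter, Finset.mem_product, Finset.mem_product] at ht ⊢
    simp only [Finset.mem_range] at ht ⊢
    obtain ⟨⟨hx2, hy2, hz2⟩, hx1, hy1, hz1, hlt⟩ := ht
    refine ⟨⟨by omega, by omega, by omega⟩, hx1, hy1, hz1, ?_⟩
    set x := t.1
    set y := t.2.1
    set z := t.2.2
    have hP₁pos : 0 < p₁*q₁*r₁ := Nat.mul_pos (Nat.mul_pos (by omega) (by omega)) (by omega)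
    have hP₂pos : 0 < p₂*q₂*r₂ := Nat.mul_pos (Nat.mul_pos (by omega) (by omega)) (by omega)
    have t1 : x*q₁*r₁*(p₂*q₂*r₂) ≤ x*q₂*r₂*(p₁*q₁*r₁) := by
      calc x*q₁*r₁*(p₂*q₂*r₂) = (x*(q₁*r₁*(q₂*r₂)))*p₂ := by ring
        _ ≤ (x*(q₁*r₁*(q₂*r₂)))*p₁ := Nat.mul_le_mul le_rfl hP
        _ = x*q₂*r₂*(p₁*q₁*r₁) := by ring
    have t2 : y*p₁*r₁*(p₂*q₂*r₂) ≤ y*p₂*r₂*(p₁*q₁*r₁) := by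
      calc y*p₁*r₁*(p₂*q₂*r₂) = (y*(p₁*r₁*(p₂*r₂)))*q₂ := by ring
        _ ≤ (y*(p₁*r₁*(p₂*r₂)))*q₁ := Nat.mul_le_mul le_rfl hQ
        _ = y*p₂*r₂*(p₁*q₁*r₁) := by ring
    have t3 : z*p₁*q₁*(p₂*q₂*r₂) ≤ z*p₂*q₂*(p₁*q₁*r₁) := by
      calc z*p₁*q₁*(p₂*q₂*r₂) = (z*(p₁*q₁*(p₂*q₂)))*r₂ := by ring
        _ ≤ (z*(p₁*q₁*(p₂*q₂)))*r₁ := Nat.mul_le_mul le_rfl hR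
        _ = z*p₂*q₂*(p₁*q₁*r₁) := by ring
    have hbig : (x*q₁*r₁ + y*p₁*r₁ + z*p₁*q₁) * (p₂*q₂*r₂)
        < (p₁*q₁*r₁) * (p₂*q₂*r₂) := by
      calc (x*q₁*r₁ + y*p₁*r₁ + z*p₁*q₁) * (p₂*q₂*r₂)
          = x*q₁*r₁*(p₂*q₂*r₂) + y*p₁*r₁*(p₂*q₂*r₂) + z*p₁*q₁*(p₂*q₂*r₂) := by ring
        _ ≤ x*q₂*r₂*(p₁*q₁*r₁) + y*p₂*r₂*(p₁*q₁*r₁) + z*p₂*q₂*(p₁*q₁*r₁) := by omega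
        _ = (x*q₂*r₂ + y*p₂*r₂ + z*p₂*q₂) * (p₁*q₁*r₁) := by ring
        _ < (p₂*q₂*r₂) * (p₁*q₁*r₁) := by
            exact Nat.mul_lt_mul_of_lt_of_le hlt le_rfl hP₁pos
        _ = (p₁*q₁*r₁) * (p₂*q₂*r₂) := by ring
    exact Nat.lt_of_mul_lt_mul_right hbig
  exact_mod_cast Finset.card_le_card hsub
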